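/- Let n ≥ 1, let η be the Haar probability measure on the orthogonal group O(n), let μ be a finite Borel measure on ℝⁿ, and let ν be a finite Borel measure on the unit sphere Sⁿ⁻¹. Define the Haar averages μ̄(A) = ∫_{O(n)} μ(U⁻¹A) dη(U) for Borel A ⊆ ℝⁿ, and ν̄(E) = ∫_{O(n)} ν(U⁻¹E) dη(U) for Borel E ⊆ Sⁿ⁻¹. Assume the pair (μ,ν) satisfies: (i) μ ≠ 0; (ii) ∫_{ℝⁿ} |x| dμ(x) < ∞ and, for every θ ∈ Sⁿ⁻¹, ∫_{ℝⁿ} ⟨x,θ⟩ dμ(x) + ∫_{Sⁿ⁻¹} ⟨x,θ⟩ dν(x) = 0; (iii) there is no hyperplane H ⊆ ℝⁿ with μ(ℝⁿ ∖ H) = 0 and ν(Sⁿ⁻¹ ∖ H) = 0. Then the pair (μ̄, ν̄) also satisfies (i), (ii) and (iii). (This shows the Haar-averaged surface area pair defining the mean Blaschke symmetral is admissible for the functional Minkowski problem.) -/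

import Mathlib

open MeasureTheory Filter Set Metric
open scoped Topology ENNReal RealInnerProductSpace

noncomputable section

abbrev Euc (n : ℕ) := EuclideanSpace ℝ (Fin n)

instance matrixMeasurableSpace (n : ℕ) :
    MeasurableSpace (Matrix (Fin n) (Fin n) ℝ) := MeasurableSpace.pi

/-- The orthogonal group `O(n)`, as the group of orthogonal `n × n` real matrices. -/
abbrev OGrp (n : ℕ) := Matrix.orthogonalGroup (Fin n) ℝ

/-- The action of an orthogonal matrix on `ℝⁿ`. -/
def ogAct {n : ℕ} (U : OGrp n) (x : Euc n) : Euc n :=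
  WithLp.toLp 2 ((U : Matrix (Fin n) (Fin n) ℝ).mulVec x)

/-- The Haar average `μ̄(A) = ∫_{O(n)} μ(U⁻¹ A) dη(U)`, realized as the bind
`∫_{O(n)} (U_♯ μ) dη(U)` of the pushforwards of `μ` under the group action. -/
def haarAvg {n : ℕ} (η : Measure (OGrp n)) (μ : Measure (Euc n)) : Measure (Euc n) :=
  η.bind fun U => μ.map (ogAct U)

/-- The admissibility conditions of the Falah–Rotem functional Minkowski problem for a pair
`(μ, ν)`, where `ν` is concentrated on the unit sphere. -/
structure FRAdmissible {n : ℕ} (μ ν : Measure (Euc n)) : Prop where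
  mu_ne_zero : μ ≠ 0
  first_moment : Integrable (fun x : Euc n => ‖x‖) μ
  centered : ∀ θ : Euc n, ‖θ‖ = 1 →
    (∫ x, ⟪x, θ⟫ ∂μ) + (∫ x, ⟪x, θ⟫ ∂ν) = 0
  not_hyperplane : ¬ ∃ (θ : Euc n) (c : ℝ), ‖θ‖ = 1 ∧
    μ {x : Euc n | ⟪x, θ⟫ ≠ c} = 0 ∧
    ν (sphere (0 : Euc n) 1 \ {x : Euc n | ⟪x, θ⟫ = c}) = 0

open Matrix in
theorem ogAct_measurable_pair {n : ℕ} : Measurable fun p : OGrp n × Euc n => ogAct p.1 p.2 := by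
  have : Measurable fun p : OGrp n × Euc n =>
      ((p.1 : Matrix (Fin n) (Fin n) ℝ).mulVec (p.2 : Fin n → ℝ) : Fin n → ℝ) := by
    apply measurable_pi_lambda
    intro i
    simp only [Matrix.mulVec, dotProduct]
    apply Finset.measurable_sum
    intro j _
    exact ((measurable_pi_apply j).comp ((measurable_pi_apply i).comp
      (measurable_subtype_coe.comp measurable_fst))).mul
      ((measurable_pi_apply j).comp ((WithLp.measurable_ofLp 2 _).comp measurable_snd))
  exact (WithLp.measurable_toLp 2 _).comp this

theorem ogAct_measurable {n : ℕ} (U : OGrp n) : Measurable (ogAct U) :=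
  ogAct_measurable_pair.comp (measurable_const.prodMk measurable_id)

open Matrix in
theorem ogAct_coe_inv {n : ℕ} (U : OGrp n) :
    ((U⁻¹ : OGrp n) : Matrix (Fin n) (Fin n) ℝ) = ((U : Matrix (Fin n) (Fin n) ℝ))ᵀ := by
  rw [← Matrix.conjTranspose_eq_transpose_of_trivial]
  rfl

open Matrix in
theorem inner_ogAct {n : ℕ} (U : OGrp n) (x θ : Euc n) :
    ⟪ogAct U x, θ⟫ = ⟪x, ogAct U⁻¹ θ⟫ := by
  simp only [ogAct, PiLp.inner_apply, RCLike.inner_apply, conj_trivial, ogAct_coe_inv]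
  calc ∑ i, θ i * ((U : Matrix (Fin n) (Fin n) ℝ).mulVec x) i
      = ((U : Matrix (Fin n) (Fin n) ℝ).mulVec x) ⬝ᵥ (θ : Fin n → ℝ) :=
        dotProduct_comm (θ : Fin n → ℝ) _
    _ = (x : Fin n → ℝ) ⬝ᵥ (((U : Matrix (Fin n) (Fin n) ℝ))ᵀ.mulVec θ) := by
        rw [Matrix.mulVec_transpose, dotProduct_comm, Matrix.dotProduct_mulVec,
          dotProduct_comm]
    _ = ∑ i, (((U : Matrix (Fin n) (Fin n) ℝ))ᵀ.mulVec θ) i * x i :=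
        dotProduct_comm (x : Fin n → ℝ) _

open Matrix in
theorem ogAct_inv_ogAct {n : ℕ} (U : OGrp n) (x : Euc n) : ogAct U⁻¹ (ogAct U x) = x := by
  have h1 : ((U⁻¹ : OGrp n) : Matrix (Fin n) (Fin n) ℝ) * (U : Matrix (Fin n) (Fin n) ℝ) = 1 := by
    have := congrArg (fun V : OGrp n => (V : Matrix (Fin n) (Fin n) ℝ)) (inv_mul_cancel U)
    simpa using this
  show WithLp.toLp 2 (((U⁻¹ : OGrp n) : Matrix (Fin n) (Fin n) ℝ).mulVec
      ((U : Matrix (Fin n) (Fin n) ℝ).mulVec x)) = x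
  rw [Matrix.mulVec_mulVec, h1]
  exact congrArg (WithLp.toLp 2) (Matrix.one_mulVec x.ofLp)

theorem norm_ogAct {n : ℕ} (U : OGrp n) (x : Euc n) : ‖ogAct U x‖ = ‖x‖ := by
  have h : ⟪ogAct U x, ogAct U x⟫ = ⟪x, x⟫ := by
    rw [inner_ogAct, ogAct_inv_ogAct]
  have := congrArg Real.sqrt h
  rwa [real_inner_self_eq_norm_mul_norm, real_inner_self_eq_norm_mul_norm,
    Real.sqrt_mul_self (norm_nonneg _), Real.sqrt_mul_self (norm_nonneg _)] at this

/-- Measurability of the pushforward kernel. -/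
theorem kernel_measurable {n : ℕ} (μ : Measure (Euc n)) [SFinite μ] :
    Measurable fun U : OGrp n => μ.map (ogAct U) := by
  apply Measure.measurable_of_measurable_coe
  intro s hs
  have key : ∀ U : OGrp n, μ.map (ogAct U) s
      = ∫⁻ x, s.indicator (fun _ => (1 : ℝ≥0∞)) (ogAct U x) ∂μ := by
    intro U
    rw [Measure.map_apply (ogAct_measurable U) hs]
    have : (fun x => s.indicator (fun _ => (1 : ℝ≥0∞)) (ogAct U x))
        = (ogAct U ⁻¹' s).indicator (fun _ => (1 : ℝ≥0∞)) := by
      funext x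
      by_cases h : ogAct U x ∈ s <;> simp [Set.indicator, h]
    rw [this, lintegral_indicator (hs.preimage (ogAct_measurable U))]
    simp
  simp_rw [key]
  exact ((measurable_const.indicator hs).comp ogAct_measurable_pair).lintegral_prod_right'

/-- Bochner integral against a bound measure. -/
theorem my_integral_bind {α β : Type*} [MeasurableSpace α] [MeasurableSpace β]
    (m : Measure α) (κ : α → Measure β) (hκ : Measurable κ)
    {f : β → ℝ} (hf : Measurable f) (hint : Integrable f (m.bind κ))
    (hall : ∀ a, Integrable f (κ a)) :
    ∫ x, f x ∂(m.bind κ) = ∫ a, ∫ x, f x ∂(κ a) ∂m := by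
  set g : α → ℝ≥0∞ := fun a => ∫⁻ x, ENNReal.ofReal (f x) ∂κ a with hg_def
  set h : α → ℝ≥0∞ := fun a => ∫⁻ x, ENNReal.ofReal (-f x) ∂κ a with hh_def
  have hg : Measurable g := (Measure.measurable_lintegral hf.ennreal_ofReal).comp hκ
  have hh : Measurable h := (Measure.measurable_lintegral hf.neg.ennreal_ofReal).comp hκ
  have hA : ∫⁻ x, ENNReal.ofReal (f x) ∂(m.bind κ) = ∫⁻ a, g a ∂m :=
    Measure.lintegral_bind hκ.aemeasurable hf.ennreal_ofReal.aemeasurable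
  have hB : ∫⁻ x, ENNReal.ofReal (-f x) ∂(m.bind κ) = ∫⁻ a, h a ∂m :=
    Measure.lintegral_bind hκ.aemeasurable hf.neg.ennreal_ofReal.aemeasurable
  have hnorm : ∫⁻ x, (‖f x‖₊ : ℝ≥0∞) ∂(m.bind κ) < ∞ := hint.2
  have finA : ∫⁻ a, g a ∂m ≠ ∞ := by
    rw [← hA]
    refine (lt_of_le_of_lt (lintegral_mono fun x => ?_) hnorm).ne
    rw [← enorm_eq_nnnorm, Real.enorm_eq_ofReal_abs]
    exact ENNReal.ofReal_le_ofReal (le_abs_self _)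
  have finB : ∫⁻ a, h a ∂m ≠ ∞ := by
    rw [← hB]
    refine (lt_of_le_of_lt (lintegral_mono fun x => ?_) hnorm).ne
    rw [← enorm_eq_nnnorm, Real.enorm_eq_ofReal_abs]
    exact ENNReal.ofReal_le_ofReal (neg_le_abs _)
  have hRHS : ∀ a, ∫ x, f x ∂(κ a) = (g a).toReal - (h a).toReal := fun a =>
    integral_eq_lintegral_pos_part_sub_lintegral_neg_part (hall a)
  rw [integral_eq_lintegral_pos_part_sub_lintegral_neg_part hint, hA, hB]
  simp_rw [hRHS]
  rw [integral_sub (integrable_toReal_of_lintegral_ne_top hg.aemeasurable finA)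
      (integrable_toReal_of_lintegral_ne_top hh.aemeasurable finB),
    integral_toReal hg.aemeasurable (ae_lt_top hg finA),
    integral_toReal hh.aemeasurable (ae_lt_top hh finB)]

/-- First moment integrability is preserved by the Haar average. -/
theorem haarAvg_norm_integrable {n : ℕ} (η : Measure (OGrp n)) [IsProbabilityMeasure η]
    (μ : Measure (Euc n)) [IsFiniteMeasure μ]
    (hμm : Integrable (fun x : Euc n => ‖x‖) μ) :
    Integrable (fun x : Euc n => ‖x‖) (haarAvg η μ) := by
  refine ⟨continuous_norm.aestronglyMeasurable, ?_⟩
  unfold HasFiniteIntegral haarAvg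
  simp only [nnnorm_norm, enorm_eq_nnnorm]
  have hmeas : Measurable fun x : Euc n => (‖x‖₊ : ℝ≥0∞) := measurable_nnnorm.coe_nnreal_ennreal
  rw [Measure.lintegral_bind (kernel_measurable μ).aemeasurable hmeas.aemeasurable]
  have key : ∀ U : OGrp n, ∫⁻ x, (‖x‖₊ : ℝ≥0∞) ∂(μ.map (ogAct U))
      = ∫⁻ x, (‖x‖₊ : ℝ≥0∞) ∂μ := by
    intro U
    rw [lintegral_map hmeas (ogAct_measurable U)]
    refine lintegral_congr fun x => ?_
    have : ‖ogAct U x‖₊ = ‖x‖₊ := NNReal.coe_injective (by simpa using norm_ogAct U x)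
    rw [this]
  simp_rw [key]
  rw [lintegral_const]
  have := hμm.2
  unfold HasFiniteIntegral at this
  simp only [nnnorm_norm, enorm_eq_nnnorm] at this
  simpa using this

theorem haarAvg_inner_integral {n : ℕ} (η : Measure (OGrp n)) [IsProbabilityMeasure η]
    (μ : Measure (Euc n)) [IsFiniteMeasure μ]
    (hμm : Integrable (fun x : Euc n => ‖x‖) μ) (θ : Euc n) (hθ : ‖θ‖ = 1) :
    ∫ x, ⟪x, θ⟫ ∂(haarAvg η μ) = ∫ U : OGrp n, (∫ x, ⟪x, ogAct U⁻¹ θ⟫ ∂μ) ∂η := by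
  have hfc : Continuous fun x : Euc n => ⟪x, θ⟫ := continuous_id.inner continuous_const
  have hfm : Measurable fun x : Euc n => ⟪x, θ⟫ := hfc.measurable
  have hbound : ∀ x : Euc n, ‖⟪x, θ⟫‖ ≤ ‖x‖ := fun x => by
    rw [Real.norm_eq_abs]
    calc |⟪x, θ⟫| ≤ ‖x‖ * ‖θ‖ := abs_real_inner_le_norm x θ
      _ = ‖x‖ := by rw [hθ, mul_one]
  have hall : ∀ U : OGrp n, Integrable (fun x => ⟪x, θ⟫) (μ.map (ogAct U)) := by
    intro U
    rw [integrable_map_measure hfc.aestronglyMeasurable (ogAct_measurable U).aemeasurable]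
    refine hμm.mono ((hfm.comp (ogAct_measurable U)).aestronglyMeasurable) ?_
    filter_upwards with x
    calc ‖⟪ogAct U x, θ⟫‖ ≤ ‖ogAct U x‖ := hbound _
      _ = ‖x‖ := norm_ogAct U x
      _ ≤ ‖‖x‖‖ := by rw [norm_norm]
  have hint : Integrable (fun x => ⟪x, θ⟫) (haarAvg η μ) := by
    refine (haarAvg_norm_integrable η μ hμm).mono hfc.aestronglyMeasurable ?_
    filter_upwards with x
    simpa [Real.norm_eq_abs, abs_norm] using hbound x
  rw [show haarAvg η μ = Measure.bind η (fun U => μ.map (ogAct U)) from rfl,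
    my_integral_bind η _ (kernel_measurable μ) hfm hint hall]
  congr 1
  funext U
  rw [integral_map (ogAct_measurable U).aemeasurable hfc.aestronglyMeasurable]
  exact integral_congr_ae (Filter.Eventually.of_forall fun x => inner_ogAct U x θ)

theorem stmt18 {n : ℕ} (hn : 1 ≤ n)
    (η : Measure (OGrp n)) [IsProbabilityMeasure η]
    -- `η` is the Haar probability measure: it is left-invariant.
    (hη : ∀ g : OGrp n, η.map (fun u => g * u) = η)
    (μ ν : Measure (Euc n)) [IsFiniteMeasure μ] [IsFiniteMeasure ν]
    (hνs : ν (sphere (0 : Euc n) 1)ᶜ = 0)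
    (hadm : FRAdmissible μ ν) :
    FRAdmissible (haarAvg η μ) (haarAvg η ν) := by
  have hκμ := kernel_measurable μ
  have hκν := kernel_measurable ν
  -- ν has a finite first moment since it is concentrated on the unit sphere
  have hsph : ∀ᵐ x ∂ν, x ∈ sphere (0 : Euc n) 1 := by
    rw [MeasureTheory.ae_iff]
    exact hνs
  have hνm : Integrable (fun x : Euc n => ‖x‖) ν := by
    refine ⟨continuous_norm.aestronglyMeasurable, ?_⟩
    unfold HasFiniteIntegral
    calc ∫⁻ x, (‖‖x‖‖₊ : ℝ≥0∞) ∂ν ≤ ∫⁻ _, 1 ∂ν := by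
          refine lintegral_mono_ae ?_
          filter_upwards [hsph] with x hx
          have : ‖x‖ = 1 := mem_sphere_zero_iff_norm.mp hx
          simp [nnnorm_norm, this]
      _ = ν Set.univ := by simp
      _ < ∞ := measure_lt_top ν Set.univ
  constructor
  · -- μ̄ ≠ 0
    intro h0
    have huniv : haarAvg η μ Set.univ = μ Set.univ := by
      unfold haarAvg
      rw [Measure.bind_apply MeasurableSet.univ hκμ.aemeasurable]
      have : ∀ U : OGrp n, μ.map (ogAct U) Set.univ = μ Set.univ := fun U => by
        rw [Measure.map_apply (ogAct_measurable U) MeasurableSet.univ, Set.preimage_univ]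
      simp_rw [this]
      rw [lintegral_const]
      simp
    rw [h0] at huniv
    simp only [Measure.coe_zero, Pi.zero_apply] at huniv
    exact hadm.mu_ne_zero (Measure.measure_univ_eq_zero.mp huniv.symm)
  · exact haarAvg_norm_integrable η μ hadm.first_moment
  · -- centeredness
    intro θ hθ
    rw [haarAvg_inner_integral η μ hadm.first_moment θ hθ,
      haarAvg_inner_integral η ν hνm θ hθ]
    have key : ∀ U : OGrp n, (∫ x, ⟪x, ogAct U⁻¹ θ⟫ ∂ν) = -(∫ x, ⟪x, ogAct U⁻¹ θ⟫ ∂μ) := by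
      intro U
      have h1 : ‖ogAct U⁻¹ θ‖ = 1 := by rw [norm_ogAct]; exact hθ
      linarith [hadm.centered _ h1]
    simp_rw [key, integral_neg]
    exact add_neg_cancel _
  · -- not concentrated on a hyperplane
    rintro ⟨θ, c, hθ, h1, h2⟩
    have hfc : Continuous fun x : Euc n => ⟪x, θ⟫ := continuous_id.inner continuous_const
    have hfm : Measurable fun x : Euc n => ⟪x, θ⟫ := hfc.measurable
    have hSc : MeasurableSet {x : Euc n | ⟪x, θ⟫ = c} := hfm (measurableSet_singleton c)
    have hS1 : MeasurableSet {x : Euc n | ⟪x, θ⟫ ≠ c} := hSc.compl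
    have hS2 : MeasurableSet (sphere (0 : Euc n) 1 \ {x : Euc n | ⟪x, θ⟫ = c}) :=
      (isClosed_sphere.measurableSet).diff hSc
    unfold haarAvg at h1 h2
    rw [Measure.bind_apply hS1 hκμ.aemeasurable] at h1
    rw [Measure.bind_apply hS2 hκν.aemeasurable] at h2
    have hmeas1 : Measurable fun U : OGrp n =>
        (μ.map (ogAct U)) {x : Euc n | ⟪x, θ⟫ ≠ c} := (Measure.measurable_coe hS1).comp hκμ
    have hmeas2 : Measurable fun U : OGrp n =>
        (ν.map (ogAct U)) (sphere (0 : Euc n) 1 \ {x : Euc n | ⟪x, θ⟫ = c}) :=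
      (Measure.measurable_coe hS2).comp hκν
    rw [lintegral_eq_zero_iff hmeas1] at h1
    rw [lintegral_eq_zero_iff hmeas2] at h2
    haveI : (ae η).NeBot := ae_neBot.mpr (IsProbabilityMeasure.ne_zero η)
    obtain ⟨U, hU1, hU2⟩ := (h1.and h2).exists
    simp only [Pi.zero_apply] at hU1 hU2
    apply hadm.not_hyperplane
    refine ⟨ogAct U⁻¹ θ, c, by rw [norm_ogAct]; exact hθ, ?_, ?_⟩
    · rw [Measure.map_apply (ogAct_measurable U) hS1] at hU1
      have hset : {x : Euc n | ⟪x, ogAct U⁻¹ θ⟫ ≠ c}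
          = ogAct U ⁻¹' {x : Euc n | ⟪x, θ⟫ ≠ c} := by
        ext x
        simp only [Set.mem_setOf_eq, Set.mem_preimage, inner_ogAct U x θ]
      rw [hset]
      exact hU1
    · rw [Measure.map_apply (ogAct_measurable U) hS2] at hU2
      have hset : sphere (0 : Euc n) 1 \ {x : Euc n | ⟪x, ogAct U⁻¹ θ⟫ = c}
          = ogAct U ⁻¹' (sphere (0 : Euc n) 1 \ {x : Euc n | ⟪x, θ⟫ = c}) := by
        ext x
        simp only [Set.mem_diff, Set.mem_setOf_eq, Set.mem_preimage, mem_sphere_zero_iff_norm,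
          norm_ogAct, inner_ogAct U x θ]
      rw [hset]
      exact hU2

end
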